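/- (One-dimensional Koksma–Hlawka inequality.) Let f : [0, 1] → ℝ have bounded total variation V(f) on [0, 1], and let x₁, …, x_N ∈ [0, 1]. Define the star discrepancy D*_N = sup_{t ∈ [0, 1]} | (1/N)·#{i : x_i ≤ t} − t |. Then the quasi–Monte Carlo integration error satisfies | (1/N) ∑_{i=1}^N f(x_i) − ∫₀¹ f(u) du | ≤ V(f) · D*_N. -/

import Mathlib

open scoped BigOperators

open scoped BigOperators
open Finset MeasureTheory

lemma abel_sum (M : ℕ) (G c : ℕ → ℝ) :
    ∑ j ∈ Finset.range M, G (j+1) * (c (j+1) - c j)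
      = G M * c M - G 0 * c 0 - ∑ j ∈ Finset.range M, c j * (G (j+1) - G j) := by
  have h := Finset.sum_range_sub (fun j => G j * c j) M
  rw [← h, ← Finset.sum_sub_distrib]
  exact Finset.sum_congr rfl fun j _ => by ring

lemma abel_sum' (M : ℕ) (G z : ℕ → ℝ) :
    ∑ j ∈ Finset.range M, G j * (z (j+1) - z j)
      = G M * z M - G 0 * z 0 - ∑ j ∈ Finset.range M, z (j+1) * (G (j+1) - G j) := by
  have h := Finset.sum_range_sub (fun j => G j * z j) M
  rw [← h, ← Finset.sum_sub_distrib]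
  exact Finset.sum_congr rfl fun j _ => by ring

lemma mono_case {N : ℕ} (hN : 0 < N) (g : ℝ → ℝ)
    (hg : MonotoneOn g (Set.Icc 0 1)) (y : Fin N → ℝ)
    (hy : ∀ i, y i ∈ Set.Icc (0:ℝ) 1) (hmono : Monotone y) (D : ℝ)
    (hD0 : 0 ≤ D)
    (hD1 : ∀ i : Fin N, ((i:ℕ)+1 : ℝ)/N - y i ≤ D)
    (hD2 : ∀ i : Fin N, y i - ((i:ℕ) : ℝ)/N ≤ D) :
    |(1 / N : ℝ) * ∑ i, g (y i) - ∫ u in (0:ℝ)..1, g u| ≤ (g 1 - g 0) * D := by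
  have hN' : (0:ℝ) < N := by exact_mod_cast hN
  set y' : ℕ → ℝ := fun j => if h : j < N then y ⟨j, h⟩ else 1 with hy'
  set z : ℕ → ℝ := fun j => if j = 0 then 0 else y' (j-1) with hzdef
  set c : ℕ → ℝ := fun j => ((min j N : ℕ) : ℝ) / N with hcdef
  have hy'mem : ∀ j, y' j ∈ Set.Icc (0:ℝ) 1 := by
    intro j
    by_cases h : j < N
    · simp only [hy', dif_pos h]; exact hy _
    · simp only [hy', dif_neg h]; exact Set.right_mem_Icc.2 zero_le_one
  have hz0 : z 0 = 0 := by simp [hzdef]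
  have hzN1 : z (N+1) = 1 := by
    simp only [hzdef, hy', Nat.add_sub_cancel]
    rw [if_neg (by omega), dif_neg (by omega)]
  have hzmem : ∀ j, z j ∈ Set.Icc (0:ℝ) 1 := by
    intro j
    rcases Nat.eq_zero_or_pos j with h | h
    · subst h; rw [hz0]; exact Set.left_mem_Icc.2 zero_le_one
    · simp only [hzdef]; rw [if_neg (by omega)]; exact hy'mem _
  have hy'mono : ∀ k, y' k ≤ y' (k+1) := by
    intro k
    by_cases h : k < N
    · by_cases h2 : k + 1 < N
      · simp only [hy', dif_pos h, dif_pos h2]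
        exact hmono (by simp [Fin.mk_le_mk])
      · simp only [hy', dif_pos h, dif_neg h2]
        exact (hy _).2
    · simp only [hy', dif_neg h, dif_neg (by omega : ¬ k + 1 < N)]; exact le_rfl
  have hzle : ∀ j, z j ≤ z (j+1) := by
    intro j
    rcases Nat.eq_zero_or_pos j with h | h
    · subst h; rw [hz0]
      exact (hzmem 1).1
    · obtain ⟨k, rfl⟩ := Nat.exists_eq_add_of_le h
      simp only [hzdef]
      rw [if_neg (by omega), if_neg (by omega)]
      have : 1 + k + 1 - 1 = (1 + k - 1) + 1 := by omega
      rw [this]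
      exact hy'mono _
  have hIccsub : ∀ j, Set.Icc (z j) (z (j+1)) ⊆ Set.Icc (0:ℝ) 1 :=
    fun j => Set.Icc_subset_Icc (hzmem j).1 (hzmem (j+1)).2
  have hint : ∀ j, IntervalIntegrable g volume (z j) (z (j+1)) := by
    intro j
    apply MonotoneOn.intervalIntegrable
    apply hg.mono
    rw [Set.uIcc_of_le (hzle j)]
    exact hIccsub j
  have hsplit : ∑ j ∈ Finset.range (N+1), ∫ u in z j..z (j+1), g u
      = ∫ u in (0:ℝ)..1, g u := by
    rw [intervalIntegral.sum_integral_adjacent_intervals (fun j _ => hint j), hz0, hzN1]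
  -- pointwise monotonicity of g on each piece
  have hΔ : ∀ j, 0 ≤ g (z (j+1)) - g (z j) :=
    fun j => sub_nonneg.2 (hg (hzmem j) (hzmem (j+1)) (hzle j))
  have hlow : ∀ j, g (z j) * (z (j+1) - z j) ≤ ∫ u in z j..z (j+1), g u := by
    intro j
    have h1 : ∫ u in z j..z (j+1), g (z j) ≤ ∫ u in z j..z (j+1), g u := by
      apply intervalIntegral.integral_mono_on (hzle j) intervalIntegrable_const (hint j)
      intro u hu
      exact hg (hzmem j) (hIccsub j hu) hu.1
    rwa [intervalIntegral.integral_const, smul_eq_mul, mul_comm] at h1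
  have hhigh : ∀ j, ∫ u in z j..z (j+1), g u ≤ g (z (j+1)) * (z (j+1) - z j) := by
    intro j
    have h1 : ∫ u in z j..z (j+1), g u ≤ ∫ u in z j..z (j+1), g (z (j+1)) := by
      apply intervalIntegral.integral_mono_on (hzle j) (hint j) intervalIntegrable_const
      intro u hu
      exact hg (hIccsub j hu) (hzmem (j+1)) hu.2
    rwa [intervalIntegral.integral_const, smul_eq_mul, mul_comm] at h1
  -- the Riemann-type sums
  have hc0 : c 0 = 0 := by simp [hcdef]
  have hcN : c N = 1 := by
    simp only [hcdef, min_self]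
    field_simp
  have hcN1 : c (N+1) = 1 := by
    simp only [hcdef, min_eq_right (Nat.le_succ N)]
    field_simp
  have hcj : ∀ j, j ≤ N → c j = (j : ℝ)/N := by
    intro j hj
    simp only [hcdef]
    rw [min_eq_left hj]
  have hzj : ∀ j (h : j < N), z (j+1) = y ⟨j, h⟩ := by
    intro j h
    simp only [hzdef, hy']
    rw [if_neg (by omega), Nat.add_sub_cancel, dif_pos h]
  -- S as a sum against c-differences
  have hS : (1 / N : ℝ) * ∑ i, g (y i)
      = ∑ j ∈ Finset.range (N+1), g (z (j+1)) * (c (j+1) - c j) := by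
    rw [Finset.sum_range_succ, hcN1, hcN, sub_self, mul_zero, add_zero]
    have hterm : ∀ j ∈ Finset.range N,
        g (z (j+1)) * (c (j+1) - c j) = g (y' j) * (1/N) := by
      intro j hj
      rw [Finset.mem_range] at hj
      rw [hzj j hj, hcj (j+1) (by omega), hcj j (by omega)]
      have : ((j:ℝ)+1)/N - (j:ℝ)/N = 1/N := by field_simp; ring
      push_cast
      rw [this]
      congr 2
      simp [hy', dif_pos hj]
    rw [Finset.sum_congr rfl hterm, ← Finset.sum_mul]
    have : ∑ j ∈ Finset.range N, g (y' j) = ∑ i : Fin N, g (y i) := by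
      rw [← Fin.sum_univ_eq_sum_range (fun j => g (y' j)) N]
      apply Finset.sum_congr rfl
      intro i _
      congr 1
      simp [hy', i.isLt]
    rw [this, mul_comm]
  -- Abel summation forms
  have hA := abel_sum (N+1) (fun j => g (z j)) c
  have hB := abel_sum' (N+1) (fun j => g (z j)) z
  have hC := abel_sum (N+1) (fun j => g (z j)) z
  simp only [hz0, hzN1, hc0, hcN1, mul_one, mul_zero, sub_zero] at hA hB hC
  -- coefficient bounds
  have hcoef1 : ∀ j ∈ Finset.range (N+1), z (j+1) - c j ≤ D := by
    intro j hj
    rw [Finset.mem_range] at hj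
    by_cases h : j < N
    · rw [hzj j h, hcj j (by omega)]
      exact hD2 ⟨j, h⟩
    · have : j = N := by omega
      subst this
      rw [hzN1, hcN]
      simpa using hD0
  have hcoef2 : ∀ j ∈ Finset.range (N+1), -D ≤ z j - c j := by
    intro j hj
    rw [Finset.mem_range] at hj
    rcases Nat.eq_zero_or_pos j with h | h
    · subst h; rw [hz0, hc0]; simpa using hD0
    · obtain ⟨k, hk⟩ : ∃ k, j = k + 1 := ⟨j - 1, by omega⟩
      subst hk
      have hkN : k < N := by omega
      rw [hzj k hkN, hcj (k+1) (by omega)]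
      have := hD1 ⟨k, hkN⟩
      push_cast at this ⊢
      linarith
  have hsumΔ : ∑ j ∈ Finset.range (N+1), (g (z (j+1)) - g (z j)) = g 1 - g 0 := by
    rw [Finset.sum_range_sub (fun j => g (z j)) (N+1), hzN1, hz0]
  -- upper bound
  have hup : ∑ j ∈ Finset.range (N+1), z (j+1) * (g (z (j+1)) - g (z j))
      - ∑ j ∈ Finset.range (N+1), c j * (g (z (j+1)) - g (z j))
      ≤ D * (g 1 - g 0) := by
    rw [← Finset.sum_sub_distrib, ← hsumΔ, Finset.mul_sum]
    apply Finset.sum_le_sum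
    intro j hj
    have h1 := hcoef1 j hj
    have h2 := hΔ j
    nlinarith
  have hdown : -(D * (g 1 - g 0))
      ≤ ∑ j ∈ Finset.range (N+1), z j * (g (z (j+1)) - g (z j))
      - ∑ j ∈ Finset.range (N+1), c j * (g (z (j+1)) - g (z j)) := by
    rw [← Finset.sum_sub_distrib, ← hsumΔ, Finset.mul_sum, ← Finset.sum_neg_distrib]
    apply Finset.sum_le_sum
    intro j hj
    have h1 := hcoef2 j hj
    have h2 := hΔ j
    nlinarith
  -- integral bounds
  have hIlow : ∑ j ∈ Finset.range (N+1), g (z j) * (z (j+1) - z j)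
      ≤ ∫ u in (0:ℝ)..1, g u := by
    rw [← hsplit]; exact Finset.sum_le_sum fun j _ => hlow j
  have hIhigh : ∫ u in (0:ℝ)..1, g u
      ≤ ∑ j ∈ Finset.range (N+1), g (z (j+1)) * (z (j+1) - z j) := by
    rw [← hsplit]; exact Finset.sum_le_sum fun j _ => hhigh j
  rw [abs_le]
  constructor
  · rw [hS, hA]
    rw [hB] at hIlow
    rw [hC] at hIhigh
    nlinarith
  · rw [hS, hA]
    rw [hB] at hIlow
    rw [hC] at hIhigh
    nlinarith


/-- **One-dimensional Koksma–Hlawka inequality.** If `f : [0,1] → ℝ` has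
bounded total variation `V(f)` on `[0,1]` and `x₁, …, x_N ∈ [0,1]` have star
discrepancy `D*_N = sup_{t ∈ [0,1]} |(1/N)·#{i : xᵢ ≤ t} − t|`, then
`|(1/N) ∑ᵢ f(xᵢ) − ∫₀¹ f| ≤ V(f)·D*_N`. -/
theorem koksma_hlawka_one_dim
    {N : ℕ} (hN : 0 < N) (f : ℝ → ℝ)
    (hf : BoundedVariationOn f (Set.Icc 0 1))
    (x : Fin N → ℝ) (hx : ∀ i, x i ∈ Set.Icc (0 : ℝ) 1) :
    |(1 / N : ℝ) * ∑ i, f (x i) - ∫ u in (0 : ℝ)..1, f u| ≤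
      (eVariationOn f (Set.Icc 0 1)).toReal *
        ⨆ t : Set.Icc (0 : ℝ) 1,
          |(Nat.card {i : Fin N // x i ≤ (t : ℝ)} : ℝ) / N - (t : ℝ)| := by
  classical
  have hN' : (0:ℝ) < N := by exact_mod_cast hN
  set D : ℝ := ⨆ t : Set.Icc (0 : ℝ) 1,
      |(Nat.card {i : Fin N // x i ≤ (t : ℝ)} : ℝ) / N - (t : ℝ)| with hDdef
  set σ : Equiv.Perm (Fin N) := Tuple.sort x with hσ
  set y : Fin N → ℝ := x ∘ σ with hydef
  have hmono : Monotone y := Tuple.monotone_sort x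
  have hy : ∀ i, y i ∈ Set.Icc (0:ℝ) 1 := fun i => hx (σ i)
  have hcard_eq : ∀ t : ℝ,
      Nat.card {i : Fin N // x i ≤ t} = Nat.card {i : Fin N // y i ≤ t} :=
    fun t => Nat.card_congr (Equiv.subtypeEquiv σ fun i => Iff.rfl).symm
  have hcard_le : ∀ t : ℝ, (Nat.card {i : Fin N // x i ≤ t} : ℝ) ≤ N := by
    intro t
    have : Nat.card {i : Fin N // x i ≤ t} ≤ N := by
      rw [Nat.card_eq_fintype_card]
      calc Fintype.card {i : Fin N // x i ≤ t} ≤ Fintype.card (Fin N) :=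
            Fintype.card_subtype_le _
        _ = N := Fintype.card_fin N
    exact_mod_cast this
  have hbdd : BddAbove (Set.range fun t : Set.Icc (0:ℝ) 1 =>
      |(Nat.card {i : Fin N // x i ≤ (t : ℝ)} : ℝ) / N - (t : ℝ)|) := by
    refine ⟨2, ?_⟩
    rintro r ⟨t, rfl⟩
    have h1 := hcard_le (t : ℝ)
    have h3 := t.2.1
    have h4 := t.2.2
    have h5 : (Nat.card {i : Fin N // x i ≤ (t : ℝ)} : ℝ) / N ≤ 1 :=
      (div_le_one hN').2 h1
    have h6 : (0:ℝ) ≤ (Nat.card {i : Fin N // x i ≤ (t : ℝ)} : ℝ) / N := by positivity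
    rw [abs_le]
    constructor <;> linarith
  have hler : ∀ t : Set.Icc (0:ℝ) 1,
      |(Nat.card {i : Fin N // x i ≤ (t : ℝ)} : ℝ) / N - (t : ℝ)| ≤ D :=
    fun t => le_ciSup hbdd t
  have hD0 : 0 ≤ D :=
    le_trans (abs_nonneg _) (hler ⟨0, Set.left_mem_Icc.2 zero_le_one⟩)
  have hD1 : ∀ i : Fin N, ((i:ℕ)+1 : ℝ)/N - y i ≤ D := by
    intro i
    have h1 : (i : ℕ) < Fintype.card {j : Fin N // y j ≤ y i} :=
      by rw [Fintype.card_subtype]; exact (Tuple.lt_card_le_iff_apply_le_of_monotone (a := y i) (j := i) hmono).2 le_rfl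
    have h2 : ((i:ℕ)+1 : ℝ) ≤ (Nat.card {j : Fin N // x j ≤ y i} : ℝ) := by
      rw [hcard_eq, Nat.card_eq_fintype_card]
      exact_mod_cast h1
    have h4 : (Nat.card {j : Fin N // x j ≤ y i} : ℝ) / N - y i ≤ D :=
      le_trans (le_abs_self _) (hler ⟨y i, hy i⟩)
    have h5 : ((i:ℕ)+1 : ℝ)/N ≤ (Nat.card {j : Fin N // x j ≤ y i} : ℝ) / N :=
      (div_le_div_iff_of_pos_right hN').2 h2
    linarith
  have hD2 : ∀ i : Fin N, y i - ((i:ℕ) : ℝ)/N ≤ D := by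
    intro i
    refine le_of_forall_pos_le_add ?_
    intro ε hε
    by_cases hcase : y i ≤ ε
    · have : (0:ℝ) ≤ ((i:ℕ) : ℝ)/N := by positivity
      linarith
    · push_neg at hcase
      set t : ℝ := y i - ε with ht
      have ht0 : 0 < t := by simp [ht]; linarith
      have ht1 : t ≤ 1 := le_trans (by simp [ht]; linarith) (hy i).2
      have hlt : t < y i := by simp [ht]; linarith
      have hcnt : Nat.card {j : Fin N // y j ≤ t} ≤ (i : ℕ) := by
        rw [Nat.card_eq_fintype_card]
        by_contra hcon
        push_neg at hcon
        have : y i ≤ t :=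
          (Tuple.lt_card_le_iff_apply_le_of_monotone (a := t) (j := i) hmono).1 (by rwa [Fintype.card_subtype] at hcon)
        linarith
      have h2 : (Nat.card {j : Fin N // x j ≤ t} : ℝ) ≤ (i : ℕ) := by
        rw [hcard_eq]; exact_mod_cast hcnt
      have h4 : t - (Nat.card {j : Fin N // x j ≤ t} : ℝ) / N ≤ D := by
        have h := hler ⟨t, ht0.le, ht1⟩
        rw [abs_sub_comm] at h
        exact le_trans (le_abs_self _) h
      have h5 : (Nat.card {j : Fin N // x j ≤ t} : ℝ) / N ≤ ((i:ℕ) : ℝ)/N :=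
        (div_le_div_iff_of_pos_right hN').2 h2
      linarith
  -- Jordan decomposition
  have hlbv : LocallyBoundedVariationOn f (Set.Icc 0 1) :=
    hf.locallyBoundedVariationOn
  set v : ℝ → ℝ := variationOnFromTo f (Set.Icc (0:ℝ) 1) 0 with hvdef
  have h0mem : (0:ℝ) ∈ Set.Icc (0:ℝ) 1 := Set.left_mem_Icc.2 zero_le_one
  have h1mem : (1:ℝ) ∈ Set.Icc (0:ℝ) 1 := Set.right_mem_Icc.2 zero_le_one
  have hkey : ∀ a ∈ Set.Icc (0:ℝ) 1, ∀ b ∈ Set.Icc (0:ℝ) 1, a ≤ b →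
      |f b - f a| ≤ v b - v a := by
    intro a ha b hb hab
    have hadd := variationOnFromTo.add hlbv h0mem ha hb
    have : |f b - f a| ≤ variationOnFromTo f (Set.Icc (0:ℝ) 1) a b := by
      rw [variationOnFromTo.eq_of_le f _ hab]
      have hedist := eVariationOn.edist_le f
        (s := Set.Icc (0:ℝ) 1 ∩ Set.Icc a b) (x := b) (y := a)
        ⟨hb, hab, le_rfl⟩ ⟨ha, le_rfl, hab⟩
      have hfin : eVariationOn f (Set.Icc (0:ℝ) 1 ∩ Set.Icc a b) ≠ ⊤ :=
        hlbv a b ha hb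
      have := ENNReal.toReal_mono hfin hedist
      rwa [edist_dist, ENNReal.toReal_ofReal dist_nonneg, Real.dist_eq] at this
    linarith [this, hadd]
  set P : ℝ → ℝ := fun t => v t + f t with hPdef
  set Q : ℝ → ℝ := fun t => v t - f t with hQdef
  have hP : MonotoneOn P (Set.Icc 0 1) := by
    intro a ha b hb hab
    have h := hkey a ha b hb hab
    have h2 := abs_le.1 h
    have h3 : -(v b - v a) ≤ f b - f a := by linarith [h2.1]
    simp only [hPdef]
    linarith [h2.1]
  have hQ : MonotoneOn Q (Set.Icc 0 1) := by
    intro a ha b hb hab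
    have h := hkey a ha b hb hab
    have h2 := abs_le.1 h
    simp only [hQdef]
    linarith [h2.2, le_abs_self (f b - f a)]
  have hintP : IntervalIntegrable P MeasureTheory.volume 0 1 := by
    apply MonotoneOn.intervalIntegrable
    rwa [Set.uIcc_of_le zero_le_one]
  have hintQ : IntervalIntegrable Q MeasureTheory.volume 0 1 := by
    apply MonotoneOn.intervalIntegrable
    rwa [Set.uIcc_of_le zero_le_one]
  have hfPQ : ∀ u, f u = (P u - Q u) / 2 := by
    intro u; simp only [hPdef, hQdef]; ring
  have hintf : ∫ u in (0:ℝ)..1, f u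
      = ((∫ u in (0:ℝ)..1, P u) - ∫ u in (0:ℝ)..1, Q u) / 2 := by
    rw [intervalIntegral.integral_congr (g := fun u => (P u - Q u)/2)
      (fun u _ => hfPQ u)]
    rw [intervalIntegral.integral_div, intervalIntegral.integral_sub hintP hintQ]
  have hsumf : ∑ i, f (x i) = ((∑ i, P (y i)) - ∑ i, Q (y i)) / 2 := by
    have h1 : ∑ i, f (y i) = ∑ i, f (x i) := Equiv.sum_comp σ (fun i => f (x i))
    rw [← h1, ← Finset.sum_sub_distrib, Finset.sum_div]
    exact Finset.sum_congr rfl fun i _ => hfPQ (y i)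
  -- apply the monotone case
  have hEP := mono_case hN P hP y hy hmono D hD0 hD1 hD2
  have hEQ := mono_case hN Q hQ y hy hmono D hD0 hD1 hD2
  have hv0 : v 0 = 0 := variationOnFromTo.self f _ 0
  have hv1 : v 1 = (eVariationOn f (Set.Icc 0 1)).toReal := by
    simp only [hvdef]
    rw [variationOnFromTo.eq_of_le f _ zero_le_one, Set.inter_self]
  rw [hsumf, hintf, ← hv1]
  have heq : (1/(N:ℝ)) * ((∑ i, P (y i) - ∑ i, Q (y i))/2)
      - ((∫ u in (0:ℝ)..1, P u) - ∫ u in (0:ℝ)..1, Q u)/2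
      = ((1/(N:ℝ) * ∑ i, P (y i) - ∫ u in (0:ℝ)..1, P u)
        - (1/(N:ℝ) * ∑ i, Q (y i) - ∫ u in (0:ℝ)..1, Q u))/2 := by ring
  rw [heq, abs_div, abs_of_pos (by norm_num : (0:ℝ) < 2)]
  have habs : |(1/(N:ℝ) * ∑ i, P (y i) - ∫ u in (0:ℝ)..1, P u)
        - (1/(N:ℝ) * ∑ i, Q (y i) - ∫ u in (0:ℝ)..1, Q u)|
      ≤ (P 1 - P 0) * D + (Q 1 - Q 0) * D :=
    le_trans (abs_sub _ _) (add_le_add hEP hEQ)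
  have h2 : (P 1 - P 0) * D + (Q 1 - Q 0) * D = 2 * (v 1 * D) := by
    simp only [hPdef, hQdef]
    rw [hv0]
    ring
  rw [h2] at habs
  linarith
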